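/- arXiv:2212.00453 — 9 statements merged into one kernel-verified Lean document; each statement's English description precedes it below -/
import Mathlib

section
/- For all α ∈ (0,1), with σ = 1 - α/2 and η the unique positive root of 1 - 3ρ²(1+ρ) = 0, the quantity f₁(α) = 2 - α - (1-α)·η^(-α) is strictly positive (in fact f₁(α) ≥ 0.6). -/
/-- For all `α ∈ (0,1)`, with `η` the unique positive root of `1 - 3ρ²(1+ρ) = 0`,
the quantity `f₁(α) = 2 - α - (1-α)·η^(-α)` is strictly positive, in fact `≥ 0.6`. -/
theorem stmt_1 (η : ℝ) (hηpos : 0 < η) (hηroot : 1 - 3 * η ^ 2 * (1 + η) = 0)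
    (α : ℝ) (hα0 : 0 < α) (hα1 : α < 1) :
    0.6 ≤ 2 - α - (1 - α) * η ^ (-α) ∧ 0 < 2 - α - (1 - α) * η ^ (-α) := by
  have hηlb : (0.465 : ℝ) ≤ η := by nlinarith [sq_nonneg η, sq_nonneg (η - 0.465)]
  have hinv : η⁻¹ ≤ 2.151 := by
    rw [inv_le_comm₀ hηpos (by norm_num)]
    linarith
  have hs : (-1 : ℝ) ≤ η⁻¹ - 1 := by
    have : 0 < η⁻¹ := inv_pos.mpr hηpos
    linarith
  have hbern : (1 + (η⁻¹ - 1)) ^ α ≤ 1 + α * (η⁻¹ - 1) :=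
    rpow_one_add_le_one_add_mul_self hs hα0.le hα1.le
  have hrw : η ^ (-α) = (1 + (η⁻¹ - 1)) ^ α := by
    rw [show (1 : ℝ) + (η⁻¹ - 1) = η⁻¹ by ring, Real.rpow_neg hηpos.le,
      ← Real.inv_rpow hηpos.le]
  have hkey : η ^ (-α) ≤ 1 + α * (η⁻¹ - 1) := hrw ▸ hbern
  constructor
  · nlinarith [sq_nonneg (α - 1/2), mul_nonneg hα0.le (sub_nonneg.mpr hα1.le),
      mul_le_mul_of_nonneg_left hkey (sub_nonneg.mpr hα1.le)]
  · nlinarith [sq_nonneg (α - 1/2), mul_nonneg hα0.le (sub_nonneg.mpr hα1.le),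
      mul_le_mul_of_nonneg_left hkey (sub_nonneg.mpr hα1.le)]
end

section
/- If ρ_j ≥ η and ρ_{j+1} > 0, where η is the unique positive root of 1 - 3ρ²(1+ρ) = 0, then (4τ_j + 3τ_{j+1})τ_j/(τ_j + τ_{j+1}) - τ_{j-1}³/(τ_j(τ_{j-1} + τ_j)) ≥ 0, where τ_j = ρ_j τ_{j-1} and τ_{j+1} = ρ_{j+1} τ_j with τ_{j-1} > 0. -/
/-- If `ρ_j ≥ η` and `ρ_{j+1} > 0`, where `η` is the unique positive root of
`1 - 3ρ²(1+ρ) = 0`, then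
`(4τ_j + 3τ_{j+1})τ_j/(τ_j + τ_{j+1}) - τ_{j-1}³/(τ_j(τ_{j-1} + τ_j)) ≥ 0`,
where `τ_j = ρ_j τ_{j-1}` and `τ_{j+1} = ρ_{j+1} τ_j` with `τ_{j-1} > 0`. -/
theorem stmt_3 (η : ℝ) (hηpos : 0 < η) (hηroot : 1 - 3 * η ^ 2 * (1 + η) = 0)
    (τjm1 ρj ρj1 : ℝ) (hτ : 0 < τjm1) (hρj : η ≤ ρj) (hρj1 : 0 < ρj1)
    (τj τj1 : ℝ) (hτj : τj = ρj * τjm1) (hτj1 : τj1 = ρj1 * τj) :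
    0 ≤ (4 * τj + 3 * τj1) * τj / (τj + τj1) - τjm1 ^ 3 / (τj * (τjm1 + τj)) := by
  have hρjpos : 0 < ρj := lt_of_lt_of_le hηpos hρj
  have hτjpos : 0 < τj := by rw [hτj]; positivity
  have hτj1pos : 0 < τj1 := by rw [hτj1]; positivity
  have hkey : 1 ≤ 3 * ρj ^ 2 * (1 + ρj) := by
    nlinarith [sq_nonneg (ρj - η), sq_nonneg (ρj + η), mul_pos hηpos hρjpos]
  rw [sub_nonneg, div_le_div_iff₀ (by positivity) (by positivity)]
  have h1 : τjm1 ^ 3 ≤ 3 * τj ^ 2 * (τjm1 + τj) := by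
    rw [hτj]; nlinarith [pow_pos hτ 3, sq_nonneg τjm1]
  nlinarith [mul_pos hτjpos hτj1pos, sq_nonneg τj, mul_pos hτ hτjpos,
    mul_le_mul_of_nonneg_right h1 (le_of_lt (add_pos hτjpos hτj1pos))]
end

section
/- For any θ > 0 and τ > 0, the quantity θτ·∫₀¹ (1-3s)(1-s)e^{-θsτ} ds equals 1 + ∫₀¹ (6s-4)e^{-θsτ} ds, and this value lies strictly between 0 and 1; consequently there exists ξ ∈ (0,1) with θτ·∫₀¹ (1-3s)(1-s)e^{-θsτ} ds = 1 - e^{-θξτ}. -/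
open Real

lemma expAux (a x : ℝ) :
    HasDerivAt (fun s : ℝ => Real.exp (-(a * s))) (-a * Real.exp (-(a * x))) x := by
  have h : HasDerivAt (fun s : ℝ => -(a * s)) (-a) x := by
    have : HasDerivAt (fun s : ℝ => -(a * id s)) (-(a * 1)) x := ((hasDerivAt_id x).const_mul a).neg
    simpa using this
  simpa [mul_comm] using h.exp

lemma prodAux (a : ℝ) (p p' : ℝ → ℝ) (x : ℝ) (hp : HasDerivAt p (p' x) x) :
    HasDerivAt (fun s : ℝ => p s * Real.exp (-(a * s)))
      ((p' x - a * p x) * Real.exp (-(a * x))) x := by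
  have : HasDerivAt (fun s : ℝ => p s * Real.exp (-(a * s))) _ x := hp.mul (expAux a x)
  convert this using 1
  ring

lemma polyAux (c3 c2 c1 c0 x : ℝ) :
    HasDerivAt (fun t : ℝ => c3*t^3 + c2*t^2 + c1*t + c0)
      (3*c3*x^2 + 2*c2*x + c1) x := by
  have h : HasDerivAt (fun t : ℝ => c3*t^3 + c2*t^2 + c1*t + c0) _ x := ((((hasDerivAt_pow 3 x).const_mul c3).add
      ((hasDerivAt_pow 2 x).const_mul c2)).add
      ((hasDerivAt_id x).const_mul c1)).add_const c0
  convert h using 1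
  push_cast; ring

lemma ftc (a c3 c2 c1 c0 : ℝ) :
    ∫ s in (0:ℝ)..1,
        ((3*c3*s^2 + 2*c2*s + c1) - a*(c3*s^3 + c2*s^2 + c1*s + c0)) * Real.exp (-(a*s))
      = (c3 + c2 + c1 + c0) * Real.exp (-a) - c0 := by
  rw [intervalIntegral.integral_eq_sub_of_hasDerivAt
      (f := fun s : ℝ => (c3*s^3 + c2*s^2 + c1*s + c0) * Real.exp (-(a*s)))
      (fun x _ => prodAux a _ (fun t => 3*c3*t^2 + 2*c2*t + c1) x (polyAux c3 c2 c1 c0 x))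
      (Continuous.intervalIntegrable (by continuity) _ _)]
  norm_num

lemma key (a : ℝ) (ha : 0 < a) :
    (a * ∫ s in (0:ℝ)..1, (1 - 3*s) * (1 - s) * Real.exp (-(a*s))
        = 1 + ∫ s in (0:ℝ)..1, (6*s - 4) * Real.exp (-(a*s))) ∧
    (0 < a * ∫ s in (0:ℝ)..1, (1 - 3*s) * (1 - s) * Real.exp (-(a*s))) ∧
    (a * ∫ s in (0:ℝ)..1, (1 - 3*s) * (1 - s) * Real.exp (-(a*s)) < 1 - Real.exp (-a)) := by
  have hexp : Continuous fun s : ℝ => Real.exp (-(a*s)) := by fun_prop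
  have hci : ∀ p : ℝ → ℝ, Continuous p →
      IntervalIntegrable (fun s => p s * Real.exp (-(a*s))) MeasureTheory.volume 0 1 :=
    fun p hp => (hp.mul hexp).intervalIntegrable _ _
  have hciI := hci (fun s => (1 - 3*s) * (1 - s)) (by fun_prop)
  have hciJ := hci (fun s => 6*s - 4) (by fun_prop)
  have hciK := hci (fun s => s*(1-s)^2) (by fun_prop)
  have hciD := hci (fun s => 4*s - 3*s^2) (by fun_prop)
  have hciE := hci (fun s => (1:ℝ)) (by fun_prop)
  set I := ∫ s in (0:ℝ)..1, (1 - 3*s) * (1 - s) * Real.exp (-(a*s)) with hI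
  set J := ∫ s in (0:ℝ)..1, (6*s - 4) * Real.exp (-(a*s)) with hJ
  set K := ∫ s in (0:ℝ)..1, s*(1-s)^2 * Real.exp (-(a*s)) with hK
  set E := ∫ s in (0:ℝ)..1, Real.exp (-(a*s)) with hE
  set D := ∫ s in (0:ℝ)..1, (4*s - 3*s^2) * Real.exp (-(a*s)) with hD
  have hE1 : E = ∫ s in (0:ℝ)..1, (1:ℝ) * Real.exp (-(a*s)) := by
    rw [hE]; apply intervalIntegral.integral_congr; intro s _; ring
  -- Part 1 : a*I - J = 1
  have h1 : a * I - J = 1 := by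
    have e1 : a * I - J
        = ∫ s in (0:ℝ)..1, ((3*0*s^2 + 2*(-3)*s + 4) - a*(0*s^3 + (-3)*s^2 + 4*s + (-1))) * Real.exp (-(a*s)) := by
      rw [hI, hJ, ← intervalIntegral.integral_const_mul,
        ← intervalIntegral.integral_sub (hciI.const_mul a) hciJ]
      apply intervalIntegral.integral_congr
      intro s _
      ring
    rw [e1, ftc a 0 (-3) 4 (-1)]
    ring
  -- Part 2 : I = a*K
  have h2 : I - a * K = 0 := by
    have e2 : I - a * K
        = ∫ s in (0:ℝ)..1, ((3*1*s^2 + 2*(-2)*s + 1) - a*(1*s^3 + (-2)*s^2 + 1*s + 0)) * Real.exp (-(a*s)) := by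
      rw [hI, hK, ← intervalIntegral.integral_const_mul,
        ← intervalIntegral.integral_sub hciI (hciK.const_mul a)]
      apply intervalIntegral.integral_congr
      intro s _
      ring
    rw [e2, ftc a 1 (-2) 1 0]
    ring
  -- Part 3 : a*E = 1 - e^{-a}
  have h3 : a * E = 1 - Real.exp (-a) := by
    have e3 : a * E
        = ∫ s in (0:ℝ)..1, ((3*0*s^2 + 2*0*s + 0) - a*(0*s^3 + 0*s^2 + 0*s + (-1))) * Real.exp (-(a*s)) := by
      rw [hE, ← intervalIntegral.integral_const_mul]
      apply intervalIntegral.integral_congr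
      intro s _
      ring
    rw [e3, ftc a 0 0 0 (-1)]
    ring
  -- Part 4 : E - I = D
  have h4 : E - I = D := by
    rw [hE1, hI, hD, ← intervalIntegral.integral_sub hciE hciI]
    apply intervalIntegral.integral_congr
    intro s _
    ring
  have pos1 : 0 < K := by
    rw [hK]
    apply intervalIntegral.intervalIntegral_pos_of_pos_on hciK
    · intro x hx
      exact mul_pos (mul_pos hx.1 (pow_pos (by linarith [hx.2]) 2)) (Real.exp_pos _)
    · norm_num
  have pos2 : 0 < D := by
    rw [hD]
    apply intervalIntegral.intervalIntegral_pos_of_pos_on hciD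
    · intro x hx
      have h5 : 0 < 4*x - 3*x^2 := by nlinarith [hx.1, hx.2]
      exact mul_pos h5 (Real.exp_pos _)
    · norm_num
  refine ⟨by linarith, ?_, ?_⟩
  · nlinarith [mul_pos ha (mul_pos ha pos1)]
  · nlinarith [mul_pos ha pos2]


/-- For any `θ > 0` and `τ > 0`, the quantity `θτ·∫₀¹ (1-3s)(1-s)e^{-θsτ} ds`
equals `1 + ∫₀¹ (6s-4)e^{-θsτ} ds`, lies strictly between `0` and `1`, and hence
equals `1 - e^{-θξτ}` for some `ξ ∈ (0,1)`. -/
theorem stmt_4 (θ τ : ℝ) (hθ : 0 < θ) (hτ : 0 < τ) :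
    θ * τ * ∫ s in (0:ℝ)..1, (1 - 3 * s) * (1 - s) * Real.exp (-θ * s * τ)
      = 1 + ∫ s in (0:ℝ)..1, (6 * s - 4) * Real.exp (-θ * s * τ) ∧
    0 < θ * τ * ∫ s in (0:ℝ)..1, (1 - 3 * s) * (1 - s) * Real.exp (-θ * s * τ) ∧
    θ * τ * (∫ s in (0:ℝ)..1, (1 - 3 * s) * (1 - s) * Real.exp (-θ * s * τ)) < 1 ∧
    ∃ ξ : ℝ, 0 < ξ ∧ ξ < 1 ∧
      θ * τ * ∫ s in (0:ℝ)..1, (1 - 3 * s) * (1 - s) * Real.exp (-θ * s * τ)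
        = 1 - Real.exp (-θ * ξ * τ) := by
  have ha : 0 < θ * τ := mul_pos hθ hτ
  have hrw : ∀ s : ℝ, Real.exp (-θ * s * τ) = Real.exp (-(θ * τ * s)) := fun s => by
    rw [show -θ * s * τ = -(θ * τ * s) by ring]
  simp only [hrw]
  obtain ⟨h1, h2, h3⟩ := key (θ*τ) ha
  set v := (θ*τ) * ∫ s in (0:ℝ)..1, (1 - 3*s) * (1 - s) * Real.exp (-(θ*τ*s)) with hv
  have hexp := Real.exp_pos (-(θ*τ))
  have h1v : 0 < 1 - v := by linarith
  have hlogneg : Real.log (1 - v) < 0 := Real.log_neg h1v (by linarith)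
  have hloggt : -(θ*τ) < Real.log (1 - v) :=
    (Real.lt_log_iff_exp_lt h1v).mpr (by linarith)
  refine ⟨h1, h2, by linarith, -Real.log (1-v) / (θ*τ), ?_, ?_, ?_⟩
  · exact div_pos (by linarith) ha
  · rw [div_lt_one ha]; linarith
  · have harg : θ * τ * (-Real.log (1-v) / (θ*τ)) = -Real.log (1-v) := by
      field_simp
    rw [harg, neg_neg, Real.exp_log h1v]
    ring
end

section
/- For a single exponential kernel with node θ > 0, the coefficient â_j^{(k)} = ∫₀¹ ((-2τ_j(1-s) - τ_{j+1})/(τ_j + τ_{j+1})) e^{-θ(t_k^* - t_{j-1} - sτ_j)} ds admits the identity â_j^{(k)} = -[e^{-θ(t_k^* - t_{j-1})} + (θτ_j/(τ_j + τ_{j+1})) ∫₀¹ (τ_j + τ_{j+1} - sτ_j)(1-s) e^{-θ(t_k^* - t_{j-1} - sτ_j)} ds]. -/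
open Real

/-- For a single exponential kernel with node `θ > 0`, the coefficient
`â_j^{(k)} = ∫₀¹ ((-2τ_j(1-s) - τ_{j+1})/(τ_j + τ_{j+1})) e^{-θ(t_k^* - t_{j-1} - sτ_j)} ds`
admits the identity
`â_j^{(k)} = -[e^{-θ(t_k^* - t_{j-1})} + (θτ_j/(τ_j + τ_{j+1})) ∫₀¹ (τ_j + τ_{j+1} - sτ_j)(1-s) e^{-θ(t_k^* - t_{j-1} - sτ_j)} ds]`. -/
theorem stmt_7 (θ tjm1 tj tkstar τj τj1 : ℝ) (hθ : 0 < θ)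
    (h0 : 0 ≤ tjm1) (h1 : tjm1 < tj) (h2 : tj < tkstar)
    (hτj : τj = tj - tjm1) (hτj1 : 0 < τj1) :
    ∫ s in (0:ℝ)..1, (-2 * τj * (1 - s) - τj1) / (τj + τj1) *
        Real.exp (-θ * (tkstar - tjm1 - s * τj))
      = -(Real.exp (-θ * (tkstar - tjm1)) + θ * τj / (τj + τj1) *
          ∫ s in (0:ℝ)..1, (τj + τj1 - s * τj) * (1 - s) *
            Real.exp (-θ * (tkstar - tjm1 - s * τj))) := by
  have hτjpos : 0 < τj := by rw [hτj]; linarith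
  have hden : τj + τj1 ≠ 0 := by positivity
  set A := tkstar - tjm1 with hA
  set g : ℝ → ℝ := fun s => (τj + τj1 - s * τj) * (1 - s) * Real.exp (-θ * (A - s * τj))
    with hg
  have hderiv : ∀ s ∈ Set.uIcc (0:ℝ) 1, HasDerivAt g
      ((-2 * τj * (1 - s) - τj1) * Real.exp (-θ * (A - s * τj))
        + θ * τj * ((τj + τj1 - s * τj) * (1 - s) * Real.exp (-θ * (A - s * τj)))) s := by
    intro s _
    have h1' : HasDerivAt (fun s : ℝ => (τj + τj1 - s * τj) * (1 - s))
        ((-τj) * (1 - s) + (τj + τj1 - s * τj) * (-1)) s := by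
      have := (((hasDerivAt_id s).mul_const τj).const_sub (τj + τj1)).fun_mul
        ((hasDerivAt_id s).const_sub 1)
      simpa using this
    have h2' : HasDerivAt (fun s : ℝ => Real.exp (-θ * (A - s * τj)))
        (θ * τj * Real.exp (-θ * (A - s * τj))) s := by
      have hi : HasDerivAt (fun s : ℝ => -θ * (A - s * τj)) (θ * τj) s := by
        have := (((hasDerivAt_id s).mul_const τj).const_sub A).const_mul (-θ)
        simpa using this.congr_deriv (by ring)
      simpa [mul_comm] using hi.exp
    have := h1'.fun_mul h2'
    refine this.congr_deriv ?_
    ring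
  have hci : IntervalIntegrable (fun s =>
      (-2 * τj * (1 - s) - τj1) * Real.exp (-θ * (A - s * τj))
        + θ * τj * ((τj + τj1 - s * τj) * (1 - s) * Real.exp (-θ * (A - s * τj))))
      MeasureTheory.volume 0 1 := by
    apply Continuous.intervalIntegrable; fun_prop
  have hFTC := intervalIntegral.integral_eq_sub_of_hasDerivAt hderiv hci
  have hg1 : g 1 = 0 := by simp [hg]
  have hg0 : g 0 = (τj + τj1) * Real.exp (-θ * A) := by simp [hg]
  rw [hg1, hg0] at hFTC
  have hi1 : IntervalIntegrable (fun s =>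
      (-2 * τj * (1 - s) - τj1) * Real.exp (-θ * (A - s * τj)))
      MeasureTheory.volume 0 1 := by
    apply Continuous.intervalIntegrable; fun_prop
  have hi2 : IntervalIntegrable (fun s =>
      θ * τj * ((τj + τj1 - s * τj) * (1 - s) * Real.exp (-θ * (A - s * τj))))
      MeasureTheory.volume 0 1 := by
    apply Continuous.intervalIntegrable; fun_prop
  rw [intervalIntegral.integral_add hi1 hi2, intervalIntegral.integral_const_mul] at hFTC
  -- Now: ∫ first + θτj * ∫ second = -(τj+τj1) exp(-θA)
  have key : ∫ s in (0:ℝ)..1, (-2 * τj * (1 - s) - τj1) * Real.exp (-θ * (A - s * τj))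
      = -((τj + τj1) * Real.exp (-θ * A))
        - θ * τj * ∫ s in (0:ℝ)..1,
            (τj + τj1 - s * τj) * (1 - s) * Real.exp (-θ * (A - s * τj)) := by
    linarith [hFTC]
  have hLHS : ∫ s in (0:ℝ)..1, (-2 * τj * (1 - s) - τj1) / (τj + τj1) *
        Real.exp (-θ * (tkstar - tjm1 - s * τj))
      = (τj + τj1)⁻¹ * ∫ s in (0:ℝ)..1,
          (-2 * τj * (1 - s) - τj1) * Real.exp (-θ * (A - s * τj)) := by
    rw [← intervalIntegral.integral_const_mul]
    apply intervalIntegral.integral_congr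
    intro s _
    simp only [hA]
    field_simp
  rw [hLHS, key]
  have hgi : intervalIntegral g 0 1 MeasureTheory.volume
      = ∫ s in (0:ℝ)..1, (τj + τj1 - s * τj) * (1 - s) * Real.exp (-θ * (A - s * τj)) := rfl
  rw [hgi]
  field_simp
  ring
end

section
/- For a single exponential kernel with node θ > 0, the coefficient ĉ_j^{(k)} = ∫_{t_{j-1}}^{t_j} ((2s - t_{j-1} - t_j)/(τ_{j+1}(τ_j + τ_{j+1}))) e^{-θ(t_k^* - s)} ds equals (θτ_j³/(τ_{j+1}(τ_j + τ_{j+1}))) ∫₀¹ s(1-s) e^{-θ(t_k^* - t_j + sτ_j)} ds. -/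
open Real

/-- For a single exponential kernel with node `θ > 0`, the coefficient
`ĉ_j^{(k)} = ∫_{t_{j-1}}^{t_j} ((2s - t_{j-1} - t_j)/(τ_{j+1}(τ_j + τ_{j+1}))) e^{-θ(t_k^* - s)} ds`
equals `(θτ_j³/(τ_{j+1}(τ_j + τ_{j+1}))) ∫₀¹ s(1-s) e^{-θ(t_k^* - t_j + sτ_j)} ds`. -/
theorem stmt_8 (θ tjm1 tj tkstar τj τj1 : ℝ) (hθ : 0 < θ)
    (h1 : tjm1 < tj) (h2 : tj < tkstar)
    (hτj : τj = tj - tjm1) (hτj1 : 0 < τj1) :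
    ∫ s in tjm1..tj, (2 * s - tjm1 - tj) / (τj1 * (τj + τj1)) *
        Real.exp (-θ * (tkstar - s))
      = θ * τj ^ 3 / (τj1 * (τj + τj1)) *
          ∫ s in (0:ℝ)..1, s * (1 - s) * Real.exp (-θ * (tkstar - tj + s * τj)) := by
  subst hτj
  have hτ : (0:ℝ) < tj - tjm1 := by linarith
  have hθ' : θ ≠ 0 := ne_of_gt hθ
  have hτ' : tj - tjm1 ≠ 0 := ne_of_gt hτ
  have hD : τj1 * ((tj - tjm1) + τj1) ≠ 0 := by positivity
  -- antiderivative for the LHS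
  set G1 : ℝ → ℝ := fun s =>
    Real.exp (-θ * (tkstar - s)) * ((2 * s - tjm1 - tj) / θ - 2 / θ ^ 2)
      / (τj1 * ((tj - tjm1) + τj1)) with hG1def
  have hG1 : ∀ s : ℝ, HasDerivAt G1
      ((2 * s - tjm1 - tj) / (τj1 * ((tj - tjm1) + τj1)) * Real.exp (-θ * (tkstar - s))) s := by
    intro s
    have h0 : HasDerivAt (fun x : ℝ => -θ * (tkstar - x)) θ s := by
      simpa using ((hasDerivAt_id s).const_sub tkstar).const_mul (-θ)
    have hexp := h0.exp
    have hpoly : HasDerivAt (fun x : ℝ => (2 * x - tjm1 - tj) / θ - 2 / θ ^ 2) (2 / θ) s := by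
      have := (((((hasDerivAt_id s).const_mul 2).sub_const tjm1).sub_const tj).div_const
        θ).sub_const (2 / θ ^ 2)
      simpa using this
    have := (hexp.mul hpoly).div_const (τj1 * ((tj - tjm1) + τj1))
    refine this.congr_deriv ?_
    field_simp
    ring
  -- antiderivative for the RHS
  set c : ℝ := θ * (tj - tjm1) with hc
  have hc' : c ≠ 0 := mul_ne_zero hθ' hτ'
  set G2 : ℝ → ℝ := fun s =>
    Real.exp (-θ * (tkstar - tj + s * (tj - tjm1))) *
      (s ^ 2 / c + (2 / c - 1) / c * s + (2 / c - 1) / c ^ 2) with hG2def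
  have hG2 : ∀ s : ℝ, HasDerivAt G2
      (s * (1 - s) * Real.exp (-θ * (tkstar - tj + s * (tj - tjm1)))) s := by
    intro s
    have h0 : HasDerivAt (fun x : ℝ => -θ * (tkstar - tj + x * (tj - tjm1))) (-c) s := by
      have := (((hasDerivAt_id s).mul_const (tj - tjm1)).const_add (tkstar - tj)).const_mul (-θ)
      simpa [hc] using this.congr_deriv (by ring)
    have hexp := h0.exp
    have hpoly : HasDerivAt (fun x : ℝ => x ^ 2 / c + (2 / c - 1) / c * x + (2 / c - 1) / c ^ 2)
        (2 * s / c + (2 / c - 1) / c) s := by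
      have := (((hasDerivAt_pow 2 s).div_const c).add
        (((hasDerivAt_id s).const_mul ((2 / c - 1) / c)))).add_const ((2 / c - 1) / c ^ 2)
      simpa using this.congr_deriv (by ring)
    have := hexp.mul hpoly
    refine this.congr_deriv ?_
    rw [hc]
    field_simp
    ring
  have hI1 : (∫ s in tjm1..tj, (2 * s - tjm1 - tj) / (τj1 * ((tj - tjm1) + τj1)) *
      Real.exp (-θ * (tkstar - s))) = G1 tj - G1 tjm1 := by
    apply intervalIntegral.integral_eq_sub_of_hasDerivAt (fun s _ => hG1 s)
    apply Continuous.intervalIntegrable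
    fun_prop
  have hI2 : (∫ s in (0:ℝ)..1, s * (1 - s) * Real.exp (-θ * (tkstar - tj + s * (tj - tjm1))))
      = G2 1 - G2 0 := by
    apply intervalIntegral.integral_eq_sub_of_hasDerivAt (fun s _ => hG2 s)
    apply Continuous.intervalIntegrable
    fun_prop
  rw [hI1, hI2, hG1def, hG2def]
  simp only
  have e1 : -θ * (tkstar - tj + 1 * (tj - tjm1)) = -θ * (tkstar - tjm1) := by ring
  have e0 : -θ * (tkstar - tj + 0 * (tj - tjm1)) = -θ * (tkstar - tj) := by ring
  rw [e1, e0, hc]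
  field_simp
  ring
end

section
/- Let θ > 0, and let τ_j > 0, τ_{j+1} > 0, and t_k^* ≥ t_j. Then -e^{-θ(t_k^* - t_j)} + (θτ_j/(τ_j + τ_{j+1})) ∫₀¹ (τ_j + τ_{j+1} + sτ_j)(1-s) e^{-θ(t_k^* - t_j + sτ_j)} ds is strictly negative; i.e., (θτ_j/(τ_j + τ_{j+1})) ∫₀¹ (τ_j + τ_{j+1} + sτ_j)(1-s) e^{-θsτ_j} ds < 1. -/
open Real

lemma exp_int_aux (a : ℝ) (ha : 0 < a) :
    ∫ s in (0:ℝ)..1, a * Real.exp (-a * s) = 1 - Real.exp (-a) := by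
  have h : ∫ s in (0:ℝ)..1, Real.exp (-a * s) = (-a)⁻¹ * (Real.exp (-a) - 1) := by
    rw [intervalIntegral.integral_comp_mul_left (fun x => Real.exp x) (by linarith : -a ≠ 0)]
    simp [integral_exp]
  rw [intervalIntegral.integral_const_mul, h, ← div_eq_inv_mul, mul_div_assoc',
    div_eq_iff (by linarith : (-a) ≠ 0)]
  ring

/-- Let `θ > 0`, `τ_j > 0`, `τ_{j+1} > 0`, `t_k^* ≥ t_j`. Then
`-e^{-θ(t_k^* - t_j)} + (θτ_j/(τ_j + τ_{j+1})) ∫₀¹ (τ_j + τ_{j+1} + sτ_j)(1-s) e^{-θ(t_k^* - t_j + sτ_j)} ds`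
is strictly negative; i.e.
`(θτ_j/(τ_j + τ_{j+1})) ∫₀¹ (τ_j + τ_{j+1} + sτ_j)(1-s) e^{-θsτ_j} ds < 1`. -/
theorem stmt_9 (θ τj τj1 tj tkstar : ℝ) (hθ : 0 < θ) (hτj : 0 < τj) (hτj1 : 0 < τj1)
    (ht : tj ≤ tkstar) :
    (-Real.exp (-θ * (tkstar - tj)) + θ * τj / (τj + τj1) *
        ∫ s in (0:ℝ)..1, (τj + τj1 + s * τj) * (1 - s) *
          Real.exp (-θ * (tkstar - tj + s * τj)) < 0) ∧
    θ * τj / (τj + τj1) *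
        (∫ s in (0:ℝ)..1, (τj + τj1 + s * τj) * (1 - s) * Real.exp (-θ * (s * τj))) < 1 := by
  have hS : 0 < τj + τj1 := by linarith
  have ha : 0 < θ * τj := mul_pos hθ hτj
  have hC : 0 ≤ θ * τj / (τj + τj1) := by positivity
  -- second part
  have h2 : θ * τj / (τj + τj1) *
      (∫ s in (0:ℝ)..1, (τj + τj1 + s * τj) * (1 - s) * Real.exp (-θ * (s * τj))) < 1 := by
    have hmono : θ * τj / (τj + τj1) *
        (∫ s in (0:ℝ)..1, (τj + τj1 + s * τj) * (1 - s) * Real.exp (-θ * (s * τj))) ≤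
        ∫ s in (0:ℝ)..1, (θ * τj) * Real.exp (-(θ * τj) * s) := by
      rw [← intervalIntegral.integral_const_mul]
      apply intervalIntegral.integral_mono_on (by norm_num)
      · apply Continuous.intervalIntegrable
        continuity
      · apply Continuous.intervalIntegrable
        continuity
      · intro s hs
        obtain ⟨hs0, hs1⟩ := hs
        have hE : 0 < Real.exp (-θ * (s * τj)) := Real.exp_pos _
        have heq : -(θ * τj) * s = -θ * (s * τj) := by ring
        rw [heq]
        have hb : (τj + τj1 + s * τj) * (1 - s) ≤ τj + τj1 := by
          nlinarith [mul_nonneg hs0 hτj1.le, mul_nonneg (mul_nonneg hs0 hs0) hτj.le]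
        calc θ * τj / (τj + τj1) * ((τj + τj1 + s * τj) * (1 - s) * Real.exp (-θ * (s * τj)))
            ≤ θ * τj / (τj + τj1) * ((τj + τj1) * Real.exp (-θ * (s * τj))) := by
              apply mul_le_mul_of_nonneg_left _ hC
              exact mul_le_mul_of_nonneg_right hb hE.le
          _ = θ * τj * Real.exp (-θ * (s * τj)) := by
              field_simp
    have hval : ∫ s in (0:ℝ)..1, (θ * τj) * Real.exp (-(θ * τj) * s) = 1 - Real.exp (-(θ * τj)) :=
      exp_int_aux _ ha
    have : (0:ℝ) < Real.exp (-(θ * τj)) := Real.exp_pos _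
    linarith [hmono, hval.le, hval.ge]
  refine ⟨?_, h2⟩
  -- first part
  have hrw : ∀ s : ℝ, (τj + τj1 + s * τj) * (1 - s) * Real.exp (-θ * (tkstar - tj + s * τj)) =
      Real.exp (-θ * (tkstar - tj)) *
        ((τj + τj1 + s * τj) * (1 - s) * Real.exp (-θ * (s * τj))) := by
    intro s
    rw [show -θ * (tkstar - tj + s * τj) = -θ * (tkstar - tj) + -θ * (s * τj) by ring,
      Real.exp_add]
    ring
  simp only [hrw]
  rw [intervalIntegral.integral_const_mul]
  have hE0 : 0 < Real.exp (-θ * (tkstar - tj)) := Real.exp_pos _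
  nlinarith [mul_lt_mul_of_pos_left h2 hE0]
end

section
/- Let S be an n×n real symmetric matrix with positive entries satisfying: (1) S_{i-1,j} ≥ S_{i,j} for all 1 ≤ j < i ≤ n; (2) S_{i,j-1} < S_{i,j} for all 1 < j ≤ i ≤ n; (3) S_{i-1,j-1} - S_{i,j-1} ≤ S_{i-1,j} - S_{i,j} for all 1 < j < i ≤ n. Then S is positive semidefinite. -/
open Finset

/-- telescoping sum over `Icc 1 m` -/
lemma stmt10_telesc (g : ℕ → ℝ) (m : ℕ) :
    ∑ a ∈ Finset.Icc 1 m, (g a - g (a - 1)) = g m - g 0 := by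
  induction m with
  | zero => simp
  | succ k ih =>
      rw [Finset.sum_Icc_succ_top (by omega), ih]
      simp

/-- triangular sum swap -/
lemma stmt10_swap (n : ℕ) (f : ℕ → ℕ → ℝ) :
    ∑ i ∈ Finset.Icc 1 n, ∑ a ∈ Finset.Icc 1 i, f i a
      = ∑ a ∈ Finset.Icc 1 n, ∑ i ∈ Finset.Icc a n, f i a := by
  apply Finset.sum_comm'
  intro i a
  simp only [Finset.mem_Icc]
  omega

noncomputable def stmt10_T (S : ℕ → ℕ → ℝ) (i j : ℕ) : ℝ :=
  if 1 ≤ i ∧ 1 ≤ j then S i j else 0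

noncomputable def stmt10_D (S : ℕ → ℕ → ℝ) (a b : ℕ) : ℝ :=
  stmt10_T S a b - stmt10_T S (a-1) b - stmt10_T S a (b-1) + stmt10_T S (a-1) (b-1)

lemma stmt10_D_deep (S : ℕ → ℕ → ℝ) (a b : ℕ) (ha : 2 ≤ a) (hb : 2 ≤ b) :
    stmt10_D S a b = S a b - S (a-1) b - S a (b-1) + S (a-1) (b-1) := by
  simp [stmt10_D, stmt10_T, show 1 ≤ a by omega, show 1 ≤ b by omega,
    show 1 ≤ a - 1 by omega, show 1 ≤ b - 1 by omega]

lemma stmt10_D_row1 (S : ℕ → ℕ → ℝ) (b : ℕ) (hb : 2 ≤ b) :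
    stmt10_D S 1 b = S 1 b - S 1 (b-1) := by
  simp [stmt10_D, stmt10_T, show 1 ≤ b by omega, show 1 ≤ b - 1 by omega]

lemma stmt10_D_col1 (S : ℕ → ℕ → ℝ) (a : ℕ) (ha : 2 ≤ a) :
    stmt10_D S a 1 = S a 1 - S (a-1) 1 := by
  simp [stmt10_D, stmt10_T, show 1 ≤ a by omega, show 1 ≤ a - 1 by omega]

lemma stmt10_D_11 (S : ℕ → ℕ → ℝ) : stmt10_D S 1 1 = S 1 1 := by
  simp [stmt10_D, stmt10_T]

lemma stmt10_rep (S : ℕ → ℕ → ℝ) (i j : ℕ) (hi : 1 ≤ i) (hj : 1 ≤ j) :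
    ∑ a ∈ Finset.Icc 1 i, ∑ b ∈ Finset.Icc 1 j, stmt10_D S a b = S i j := by
  have hin : ∀ a, ∑ b ∈ Finset.Icc 1 j, stmt10_D S a b
      = (stmt10_T S a j - stmt10_T S (a-1) j) - (stmt10_T S a 0 - stmt10_T S (a-1) 0) := by
    intro a
    have := stmt10_telesc (fun b => stmt10_T S a b - stmt10_T S (a-1) b) j
    rw [← this]
    apply Finset.sum_congr rfl
    intro b _
    simp only [stmt10_D]
    ring
  calc ∑ a ∈ Finset.Icc 1 i, ∑ b ∈ Finset.Icc 1 j, stmt10_D S a b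
      = ∑ a ∈ Finset.Icc 1 i,
          ((fun a => stmt10_T S a j) a - (fun a => stmt10_T S a j) (a-1)) := by
        apply Finset.sum_congr rfl
        intro a _
        rw [hin a]
        simp [stmt10_T]
    _ = stmt10_T S i j - stmt10_T S 0 j := stmt10_telesc _ i
    _ = S i j := by simp [stmt10_T, hi, hj]

lemma stmt10_quadid (n : ℕ) (S : ℕ → ℕ → ℝ) (x : ℕ → ℝ) :
    ∑ i ∈ Finset.Icc 1 n, ∑ j ∈ Finset.Icc 1 n, x i * S i j * x j
      = ∑ a ∈ Finset.Icc 1 n, ∑ b ∈ Finset.Icc 1 n,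
          stmt10_D S a b * (∑ i ∈ Finset.Icc a n, x i) * (∑ j ∈ Finset.Icc b n, x j) := by
  calc ∑ i ∈ Finset.Icc 1 n, ∑ j ∈ Finset.Icc 1 n, x i * S i j * x j
      = ∑ i ∈ Finset.Icc 1 n, ∑ j ∈ Finset.Icc 1 n,
          ∑ a ∈ Finset.Icc 1 i, ∑ b ∈ Finset.Icc 1 j, x i * stmt10_D S a b * x j := by
        apply Finset.sum_congr rfl; intro i hi
        apply Finset.sum_congr rfl; intro j hj
        simp only [Finset.mem_Icc] at hi hj
        rw [← stmt10_rep S i j hi.1 hj.1]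
        simp only [Finset.mul_sum, Finset.sum_mul]
    _ = ∑ i ∈ Finset.Icc 1 n, ∑ a ∈ Finset.Icc 1 i, ∑ j ∈ Finset.Icc 1 n,
          ∑ b ∈ Finset.Icc 1 j, x i * stmt10_D S a b * x j := by
        apply Finset.sum_congr rfl; intro i _
        exact Finset.sum_comm
    _ = ∑ a ∈ Finset.Icc 1 n, ∑ i ∈ Finset.Icc a n, ∑ j ∈ Finset.Icc 1 n,
          ∑ b ∈ Finset.Icc 1 j, x i * stmt10_D S a b * x j := stmt10_swap n _
    _ = ∑ a ∈ Finset.Icc 1 n, ∑ i ∈ Finset.Icc a n, ∑ b ∈ Finset.Icc 1 n,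
          ∑ j ∈ Finset.Icc b n, x i * stmt10_D S a b * x j := by
        apply Finset.sum_congr rfl; intro a _
        apply Finset.sum_congr rfl; intro i _
        exact stmt10_swap n _
    _ = ∑ a ∈ Finset.Icc 1 n, ∑ b ∈ Finset.Icc 1 n, ∑ i ∈ Finset.Icc a n,
          ∑ j ∈ Finset.Icc b n, x i * stmt10_D S a b * x j := by
        apply Finset.sum_congr rfl; intro a _
        exact Finset.sum_comm
    _ = ∑ a ∈ Finset.Icc 1 n, ∑ b ∈ Finset.Icc 1 n,
          stmt10_D S a b * (∑ i ∈ Finset.Icc a n, x i) * (∑ j ∈ Finset.Icc b n, x j) := by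
        apply Finset.sum_congr rfl; intro a _
        apply Finset.sum_congr rfl; intro b _
        simp only [Finset.mul_sum, Finset.sum_mul]
        rw [Finset.sum_comm]
        apply Finset.sum_congr rfl; intro i _
        apply Finset.sum_congr rfl; intro j _
        ring

/-- a symmetric matrix with nonpositive off-diagonal entries and nonnegative
row sums gives a nonnegative quadratic form -/
lemma stmt10_dd (n : ℕ) (d : ℕ → ℕ → ℝ) (y : ℕ → ℝ)
    (hsymm : ∀ a ∈ Finset.Icc 1 n, ∀ b ∈ Finset.Icc 1 n, d a b = d b a)
    (hoff : ∀ a ∈ Finset.Icc 1 n, ∀ b ∈ Finset.Icc 1 n, a ≠ b → d a b ≤ 0)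
    (hrow : ∀ a ∈ Finset.Icc 1 n, 0 ≤ ∑ b ∈ Finset.Icc 1 n, d a b) :
    0 ≤ ∑ a ∈ Finset.Icc 1 n, ∑ b ∈ Finset.Icc 1 n, d a b * y a * y b := by
  have hsw : ∑ a ∈ Finset.Icc 1 n, ∑ b ∈ Finset.Icc 1 n, d a b * y b ^ 2
      = ∑ a ∈ Finset.Icc 1 n, ∑ b ∈ Finset.Icc 1 n, d a b * y a ^ 2 := by
    rw [Finset.sum_comm]
    apply Finset.sum_congr rfl; intro a ha
    apply Finset.sum_congr rfl; intro b hb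
    rw [hsymm b hb a ha]
  have key : ∑ a ∈ Finset.Icc 1 n, ∑ b ∈ Finset.Icc 1 n, d a b * y a * y b
      = (∑ a ∈ Finset.Icc 1 n, ∑ b ∈ Finset.Icc 1 n, d a b * y a ^ 2)
        + (∑ a ∈ Finset.Icc 1 n, ∑ b ∈ Finset.Icc 1 n, -(d a b * (y a - y b) ^ 2 / 2))
        + ((∑ a ∈ Finset.Icc 1 n, ∑ b ∈ Finset.Icc 1 n, d a b * y b ^ 2)
          - (∑ a ∈ Finset.Icc 1 n, ∑ b ∈ Finset.Icc 1 n, d a b * y a ^ 2)) / 2 := by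
    rw [← Finset.sum_sub_distrib, Finset.sum_div,
      ← Finset.sum_add_distrib, ← Finset.sum_add_distrib]
    apply Finset.sum_congr rfl; intro a _
    rw [← Finset.sum_sub_distrib, Finset.sum_div,
      ← Finset.sum_add_distrib, ← Finset.sum_add_distrib]
    apply Finset.sum_congr rfl; intro b _
    ring
  rw [key, hsw, sub_self, zero_div, add_zero]
  have t1 : 0 ≤ ∑ a ∈ Finset.Icc 1 n, ∑ b ∈ Finset.Icc 1 n, d a b * y a ^ 2 := by
    apply Finset.sum_nonneg
    intro a ha
    have e : ∑ b ∈ Finset.Icc 1 n, d a b * y a ^ 2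
        = (∑ b ∈ Finset.Icc 1 n, d a b) * y a ^ 2 := by rw [Finset.sum_mul]
    rw [e]
    exact mul_nonneg (hrow a ha) (sq_nonneg _)
  have t2 : 0 ≤ ∑ a ∈ Finset.Icc 1 n, ∑ b ∈ Finset.Icc 1 n, -(d a b * (y a - y b) ^ 2 / 2) := by
    apply Finset.sum_nonneg; intro a ha
    apply Finset.sum_nonneg; intro b hb
    rcases eq_or_ne a b with h | h
    · subst h; simp
    · have hd := hoff a ha b hb h
      have h2 : d a b * (y a - y b) ^ 2 ≤ 0 := mul_nonpos_of_nonpos_of_nonneg hd (sq_nonneg _)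
      linarith
  linarith

/-- Let `S` be an `n×n` real symmetric matrix (indexed by `1,…,n`) with positive
entries satisfying:
(1) `S_{i-1,j} ≥ S_{i,j}` for all `1 ≤ j < i ≤ n`;
(2) `S_{i,j-1} < S_{i,j}` for all `1 < j ≤ i ≤ n`;
(3) `S_{i-1,j-1} - S_{i,j-1} ≤ S_{i-1,j} - S_{i,j}` for all `1 < j < i ≤ n`.
Then `S` is positive semidefinite. -/
theorem stmt_10 (n : ℕ) (S : ℕ → ℕ → ℝ)
    (hsym : ∀ i j, 1 ≤ i → i ≤ n → 1 ≤ j → j ≤ n → S i j = S j i)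
    (hpos : ∀ i j, 1 ≤ i → i ≤ n → 1 ≤ j → j ≤ n → 0 < S i j)
    (h1 : ∀ i j, 1 ≤ j → j < i → i ≤ n → S i j ≤ S (i - 1) j)
    (h2 : ∀ i j, 1 < j → j ≤ i → i ≤ n → S i (j - 1) < S i j)
    (h3 : ∀ i j, 1 < j → j < i → i ≤ n →
      S (i - 1) (j - 1) - S i (j - 1) ≤ S (i - 1) j - S i j) :
    ∀ x : ℕ → ℝ,
      0 ≤ ∑ i ∈ Finset.Icc 1 n, ∑ j ∈ Finset.Icc 1 n, x i * S i j * x j := by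
  intro x
  rw [stmt10_quadid n S x]
  apply stmt10_dd n (stmt10_D S) (fun a => ∑ i ∈ Finset.Icc a n, x i)
  · -- symmetry of D
    intro a ha b hb
    simp only [Finset.mem_Icc] at ha hb
    by_cases ha1 : a = 1 <;> by_cases hb1 : b = 1
    · subst ha1; subst hb1; rfl
    · subst ha1
      have hb2 : 2 ≤ b := by omega
      rw [stmt10_D_row1 S b hb2, stmt10_D_col1 S b hb2,
        hsym 1 b le_rfl (by omega) hb.1 hb.2,
        hsym 1 (b-1) le_rfl (by omega) (by omega) (by omega)]
    · subst hb1
      have ha2 : 2 ≤ a := by omega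
      rw [stmt10_D_row1 S a ha2, stmt10_D_col1 S a ha2,
        hsym 1 a le_rfl (by omega) ha.1 ha.2,
        hsym 1 (a-1) le_rfl (by omega) (by omega) (by omega)]
    · have ha2 : 2 ≤ a := by omega
      have hb2 : 2 ≤ b := by omega
      rw [stmt10_D_deep S a b ha2 hb2, stmt10_D_deep S b a hb2 ha2,
        hsym a b ha.1 ha.2 hb.1 hb.2,
        hsym (a-1) b (by omega) (by omega) hb.1 hb.2,
        hsym a (b-1) ha.1 ha.2 (by omega) (by omega),
        hsym (a-1) (b-1) (by omega) (by omega) (by omega) (by omega)]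
      ring
  · -- off-diagonal entries nonpositive
    have main : ∀ a b, 1 ≤ a → a ≤ n → 1 ≤ b → b < a → stmt10_D S a b ≤ 0 := by
      intro a b ha1 ha2 hb1 hba
      have ha' : 2 ≤ a := by omega
      by_cases hb' : b = 1
      · subst hb'
        rw [stmt10_D_col1 S a ha']
        have := h1 a 1 le_rfl (by omega) ha2
        linarith
      · have hb2' : 2 ≤ b := by omega
        rw [stmt10_D_deep S a b ha' hb2']
        have := h3 a b (by omega) hba ha2
        linarith
    intro a ha b hb hab
    simp only [Finset.mem_Icc] at ha hb
    rcases lt_or_gt_of_ne hab with h | h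
    · have hD := main b a hb.1 hb.2 ha.1 h
      have ha2 : 2 ≤ b := by omega
      by_cases ha' : a = 1
      · subst ha'
        rw [stmt10_D_row1 S b ha2,
          hsym 1 b le_rfl (by omega) hb.1 hb.2,
          hsym 1 (b-1) le_rfl (by omega) (by omega) (by omega)]
        rw [stmt10_D_col1 S b ha2] at hD
        linarith
      · have haa : 2 ≤ a := by omega
        rw [stmt10_D_deep S a b haa ha2,
          hsym a b ha.1 ha.2 hb.1 hb.2,
          hsym (a-1) b (by omega) (by omega) hb.1 hb.2,
          hsym a (b-1) ha.1 ha.2 (by omega) (by omega),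
          hsym (a-1) (b-1) (by omega) (by omega) (by omega) (by omega)]
        rw [stmt10_D_deep S b a ha2 haa] at hD
        linarith
    · exact main a b ha.1 ha.2 hb.1 h
  · -- row sums nonnegative
    intro a ha
    simp only [Finset.mem_Icc] at ha
    have hrs : ∑ b ∈ Finset.Icc 1 n, stmt10_D S a b
        = stmt10_T S a n - stmt10_T S (a-1) n := by
      have ht := stmt10_telesc (fun b => stmt10_T S a b - stmt10_T S (a-1) b) n
      have e : ∑ b ∈ Finset.Icc 1 n, stmt10_D S a b
          = ∑ b ∈ Finset.Icc 1 n,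
              ((stmt10_T S a b - stmt10_T S (a-1) b)
                - (stmt10_T S a (b-1) - stmt10_T S (a-1) (b-1))) := by
        apply Finset.sum_congr rfl; intro b _
        simp only [stmt10_D]; ring
      rw [e, ht]
      simp [stmt10_T]
    rw [hrs]
    by_cases ha' : a = 1
    · subst ha'
      have hn : 1 ≤ n := ha.2
      simp only [stmt10_T, show (1:ℕ) - 1 = 0 from rfl]
      rw [if_pos ⟨le_rfl, hn⟩, if_neg (by omega)]
      have := hpos 1 n le_rfl hn hn le_rfl
      linarith
    · have ha2 : 2 ≤ a := by omega
      simp only [stmt10_T]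
      rw [if_pos ⟨ha.1, (by omega : 1 ≤ n)⟩, if_pos ⟨(by omega : 1 ≤ a-1), (by omega : 1 ≤ n)⟩]
      rw [hsym a n ha.1 ha.2 (by omega) le_rfl,
        hsym (a-1) n (by omega) (by omega) (by omega) le_rfl]
      have := h2 n a (by omega) ha.2 le_rfl
      linarith
end

section
/- Suppose α ∈ (0,1), σ = 1-α/2, η is the unique positive root of 1-3ρ²(1+ρ)=0, and w: [Δt, T] → ℝ satisfies |t^{-α} - w(t)| ≤ ε on [Δt, T] with w(t) = Σ_{ℓ=1}^{N_q} ϖ_ℓ e^{-θ_ℓ t}, ϖ_ℓ, θ_ℓ > 0. If στ₂ ≥ Δt, στ₂ ≤ T, ρ₂ = τ₂/τ₁ ≥ η, and ε ≤ 1/(5(1-α)(στ₁)^α), then σ^{1-α}/((1-α)τ₁^α) - (1/2)Σ_ℓ ϖ_ℓ e^{-θ_ℓ στ₂} ≥ (1/(2(1-α)(στ₁)^α))·(2-α-(1-α)η^{-α}) - ε/2 > 0. -/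
open Real

set_option maxHeartbeats 1000000 in
/-- Positivity of the first diagonal entry `[B]₁₁`. Suppose `α ∈ (0,1)`,
`σ = 1-α/2`, `η` the unique positive root of `1-3ρ²(1+ρ)=0`, and
`w(t) = Σ_ℓ ϖ_ℓ e^{-θ_ℓ t}` (with `ϖ_ℓ, θ_ℓ > 0`) satisfies `|t^{-α} - w(t)| ≤ ε`
on `[Δt, T]`. If `στ₂ ∈ [Δt, T]`, `τ₂/τ₁ ≥ η`, and `ε ≤ 1/(5(1-α)(στ₁)^α)`, then
`σ^{1-α}/((1-α)τ₁^α) - (1/2)Σ_ℓ ϖ_ℓ e^{-θ_ℓ στ₂}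
  ≥ (1/(2(1-α)(στ₁)^α))·(2-α-(1-α)η^{-α}) - ε/2 > 0`. -/
theorem stmt_13 (α σ η ε Δt T τ1 τ2 : ℝ) (Nq : ℕ) (ϖ θ : Fin Nq → ℝ)
    (hα0 : 0 < α) (hα1 : α < 1) (hσ : σ = 1 - α / 2)
    (hηpos : 0 < η) (hηroot : 1 - 3 * η ^ 2 * (1 + η) = 0)
    (hτ1 : 0 < τ1) (hτ2 : 0 < τ2)
    (hϖ : ∀ l, 0 < ϖ l) (hθ : ∀ l, 0 < θ l)
    (happrox : ∀ t : ℝ, Δt ≤ t → t ≤ T →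
      |t ^ (-α) - ∑ l, ϖ l * Real.exp (-(θ l) * t)| ≤ ε)
    (h1 : Δt ≤ σ * τ2) (h2 : σ * τ2 ≤ T) (hρ : η ≤ τ2 / τ1)
    (hε : ε ≤ 1 / (5 * (1 - α) * (σ * τ1) ^ α)) :
    σ ^ (1 - α) / ((1 - α) * τ1 ^ α) -
        (1 / 2) * ∑ l, ϖ l * Real.exp (-(θ l) * (σ * τ2))
      ≥ 1 / (2 * (1 - α) * (σ * τ1) ^ α) * (2 - α - (1 - α) * η ^ (-α)) - ε / 2 ∧
    0 < 1 / (2 * (1 - α) * (σ * τ1) ^ α) * (2 - α - (1 - α) * η ^ (-α)) - ε / 2 := by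
  have hσpos : 0 < σ := by rw [hσ]; linarith
  have h1α : 0 < 1 - α := by linarith
  -- bounds on η
  have hη47 : (0.47 : ℝ) ≤ η := by nlinarith [sq_nonneg (η - 0.47), sq_nonneg η, hηpos.le]
  have hη1 : η ≤ 1 := by nlinarith [sq_nonneg η, hηpos.le]
  -- key positive quantities
  have hA : 0 < (σ * τ1) ^ α := rpow_pos_of_pos (by positivity) α
  set A : ℝ := (σ * τ1) ^ α with hAdef
  clear_value A
  -- Bernoulli bound on η^{-α}
  have hEeq : η ^ (-α) = (1 / η) ^ α := by
    rw [Real.rpow_neg hηpos.le, one_div, Real.inv_rpow hηpos.le]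
  have hEle : η ^ (-α) ≤ 1 + α * (1 / η - 1) := by
    have hs : (-1 : ℝ) ≤ 1 / η - 1 := by
      have : (0:ℝ) < 1 / η := by positivity
      linarith
    have hber := rpow_one_add_le_one_add_mul_self hs hα0.le hα1.le
    have h' : (1 : ℝ) + (1 / η - 1) = 1 / η := by ring
    rw [h'] at hber
    rw [hEeq]; exact hber
  -- K := 2 - α - (1-α) η^{-α} ≥ 0.6
  have hinv : 1 / η ≤ 1 / 0.47 := by
    apply one_div_le_one_div_of_le (by norm_num) hη47
  have hK : (0.6 : ℝ) ≤ 2 - α - (1 - α) * η ^ (-α) := by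
    have h3 : (1 - α) * η ^ (-α) ≤ (1 - α) * (1 + α * (1 / η - 1)) :=
      mul_le_mul_of_nonneg_left hEle h1α.le
    have h4 : (1 - α) * (1 + α * (1 / η - 1)) ≤ (1 - α) * (1 + α * (1 / 0.47 - 1)) := by
      apply mul_le_mul_of_nonneg_left _ h1α.le
      have : α * (1 / η - 1) ≤ α * (1 / 0.47 - 1) := by
        apply mul_le_mul_of_nonneg_left (by linarith) hα0.le
      linarith
    nlinarith [sq_nonneg (α - 1/2)]
  -- sum bound
  have hS : ∑ l, ϖ l * Real.exp (-(θ l) * (σ * τ2)) ≤ (σ * τ2) ^ (-α) + ε := by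
    have := happrox (σ * τ2) h1 h2
    rw [abs_le] at this
    linarith [this.1]
  -- (στ₂)^{-α} ≤ η^{-α} / A
  have hστ2 : σ * τ1 * η ≤ σ * τ2 := by
    have : τ1 * η ≤ τ2 := by
      rw [le_div_iff₀ hτ1] at hρ; linarith
    nlinarith
  have hB : (σ * τ2) ^ (-α) ≤ η ^ (-α) / A := by
    have h5 : (σ * τ2) ^ (-α) ≤ (σ * τ1 * η) ^ (-α) :=
      Real.rpow_le_rpow_of_nonpos (by positivity) hστ2 (by linarith)
    have h6 : (σ * τ1 * η) ^ (-α) = (σ * τ1) ^ (-α) * η ^ (-α) :=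
      Real.mul_rpow (by positivity) hηpos.le
    have h7 : (σ * τ1) ^ (-α) = 1 / A := by
      rw [hAdef, Real.rpow_neg (by positivity)]; ring
    rw [h6, h7] at h5
    have h8 : 1 / A * η ^ (-α) = η ^ (-α) / A := by ring
    linarith [h5, h8.symm.le, h8.le]
  -- first term identity
  have hfirst : σ ^ (1 - α) / ((1 - α) * τ1 ^ α) = (2 - α) / (2 * (1 - α) * A) := by
    have hσα : σ ^ (1 - α) = σ / σ ^ α := by
      rw [eq_div_iff (ne_of_gt (rpow_pos_of_pos hσpos α)), ← Real.rpow_add hσpos,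
        sub_add_cancel, Real.rpow_one]
    have hAeq : A = σ ^ α * τ1 ^ α := by
      rw [hAdef]; exact Real.mul_rpow hσpos.le hτ1.le
    set x : ℝ := σ ^ α with hx
    set y : ℝ := τ1 ^ α with hy
    have h8 : (0:ℝ) < x := rpow_pos_of_pos hσpos α
    have h9 : (0:ℝ) < y := rpow_pos_of_pos hτ1 α
    clear_value x y
    rw [hσα, hAeq, div_div, div_eq_div_iff (by positivity) (by positivity), hσ]
    ring
  constructor
  · rw [hfirst]
    have expand : 1 / (2 * (1 - α) * A) * (2 - α - (1 - α) * η ^ (-α))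
        = (2 - α) / (2 * (1 - α) * A) - η ^ (-α) / (2 * A) := by
      field_simp
    rw [expand]
    have hSb : ∑ l, ϖ l * Real.exp (-(θ l) * (σ * τ2)) ≤ η ^ (-α) / A + ε := by
      linarith
    have hhalf : η ^ (-α) / A / 2 = η ^ (-α) / (2 * A) := by ring
    linarith [hSb, hhalf.le, hhalf.symm.le]
  · have hεA : ε ≤ 1 / (5 * (1 - α) * A) := hε
    have hKpos : 0.6 / (2 * (1 - α) * A) ≤ 1 / (2 * (1 - α) * A) * (2 - α - (1 - α) * η ^ (-α)) := by
      rw [div_eq_mul_one_div, mul_comm]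
      exact mul_le_mul_of_nonneg_left hK (by positivity)
    have : 1 / (5 * (1 - α) * A) < 0.6 / ((1 - α) * A) := by
      rw [div_lt_div_iff₀ (by positivity) (by positivity)]; nlinarith
    have h10 : 0.6 / (2 * (1 - α) * A) = 0.3 / ((1 - α) * A) := by
      rw [div_eq_div_iff (by positivity) (by positivity)]; ring
    have h11 : 1 / (5 * (1 - α) * A) = 0.2 / ((1 - α) * A) := by
      rw [div_eq_div_iff (by positivity) (by positivity)]; ring
    have h12 : ε / 2 ≤ 0.1 / ((1 - α) * A) := by
      have := hεA; rw [h11] at this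
      have : ε / 2 ≤ 0.2 / ((1 - α) * A) / 2 := by linarith
      calc ε / 2 ≤ 0.2 / ((1 - α) * A) / 2 := this
        _ = 0.1 / ((1 - α) * A) := by ring
    have h13 : (0:ℝ) < 0.1 / ((1 - α) * A) := by positivity
    rw [h10] at hKpos
    have h14 : 0.3 / ((1 - α) * A) = 0.1 / ((1 - α) * A) + 0.2 / ((1 - α) * A) := by ring
    have h15 : (0:ℝ) < 0.2 / ((1 - α) * A) := by positivity
    linarith
end

section
/- For α ∈ (0,1), σ = 1-α/2, and positive reals τ_k, τ_{k+1} with ρ_{k+1} = τ_{k+1}/τ_k ≥ η where η is the unique positive root of 1-3ρ²(1+ρ)=0: σ^{1-α}/((1-α)τ_k^α) - (1/2)(στ_k)^{-α} - (1/2)(στ_{k+1})^{-α} + (1/2)(στ_{k+1}+τ_k)^{-α} ≥ (1/(2(1-α)(στ_k)^α))·(1-(1-α)σ^α[(ση)^{-α}-(ση+1)^{-α}]) ≥ 0.3/((1-α)(στ_k)^α) > 0. -/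
lemma chord {c a : ℝ} (hc : 0 ≤ c) (h0 : 0 ≤ a) (h1 : a ≤ 1) : c ^ a ≤ 1 - a + a * c := by
  have h := Real.geom_mean_le_arith_mean2_weighted (sub_nonneg.2 h1) h0 zero_le_one hc
    (by ring)
  rw [Real.one_rpow, one_mul] at h
  linarith

lemma g_anti (a x y : ℝ) (ha0 : 0 < a) (hx : 0 < x) (hxy : x ≤ y) :
    y ^ (-a) - (y + 1) ^ (-a) ≤ x ^ (-a) - (x + 1) ^ (-a) := by
  have hy : 0 < y := lt_of_lt_of_le hx hxy
  have fac : ∀ z : ℝ, 0 < z → z ^ (-a) - (z + 1) ^ (-a) = z ^ (-a) * (1 - (z / (z + 1)) ^ a) := by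
    intro z hz
    have hz1 : (0:ℝ) < z + 1 := by linarith
    have hza : (0:ℝ) < z ^ a := Real.rpow_pos_of_pos hz a
    have hz1a : (0:ℝ) < (z + 1) ^ a := Real.rpow_pos_of_pos hz1 a
    rw [Real.div_rpow hz.le hz1.le, Real.rpow_neg hz.le, Real.rpow_neg hz1.le]
    field_simp
  rw [fac x hx, fac y hy]
  have hx1 : (0:ℝ) < x + 1 := by linarith
  have hy1 : (0:ℝ) < y + 1 := by linarith
  apply mul_le_mul
  · rw [Real.rpow_neg hx.le, Real.rpow_neg hy.le]
    exact inv_anti₀ (Real.rpow_pos_of_pos hx a) (Real.rpow_le_rpow hx.le hxy ha0.le)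
  · have h1 : (x / (x + 1)) ^ a ≤ (y / (y + 1)) ^ a := by
      apply Real.rpow_le_rpow (by positivity) _ ha0.le
      rw [div_le_div_iff₀ hx1 hy1]; nlinarith
    linarith
  · have : (y / (y + 1)) ^ a ≤ 1 := by
      apply Real.rpow_le_one (by positivity) _ ha0.le
      rw [div_le_one hy1]; linarith
    linarith
  · exact (Real.rpow_pos_of_pos hx (-a)).le

lemma core1 (a : ℝ) (ha0 : 0 ≤ a) (ha1 : a ≤ 1) :
    (1-a)*((1-a+a*(1451/1000))^2*((1-a+a*(476/1000))*(2-a)+2*a) - (2-a))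
      ≤ 2/5*((1-a+a*(476/1000))*(2-a)+2*a) := by
  nlinarith [sq_nonneg (a - 131/250), mul_nonneg ha0 (sub_nonneg.2 ha1), sq_nonneg (a*(a-131/250)), mul_nonneg (mul_nonneg ha0 ha0) (sub_nonneg.2 ha1), sq_nonneg a, mul_nonneg (mul_nonneg ha0 ha0) ha0, sq_nonneg (a*a)]

lemma core (a s e : ℝ) (ha0 : 0 ≤ a) (ha1 : a ≤ 1) (hs1 : 1 ≤ s) (hs : s ≤ 1451/1000)
    (he0 : 0 ≤ e) (he : e ≤ 476/1000) :
    (1-a)*((1-a+a*s)^2*((1-a+a*e)*(2-a)+2*a) - (2-a)) ≤ 2/5*((1-a+a*e)*(2-a)+2*a) := by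
  have h2a : (0:ℝ) ≤ 2 - a := by linarith
  have h1a : (0:ℝ) ≤ 1 - a := by linarith
  have hE : (0:ℝ) ≤ (1-a+a*e)*(2-a)+2*a := by
    nlinarith [mul_nonneg h1a h2a, mul_nonneg (mul_nonneg ha0 he0) h2a]
  by_cases h : (1-a)*(1-a+a*s)^2 ≤ 2/5
  · nlinarith [mul_le_mul_of_nonneg_right h hE, mul_nonneg h1a h2a]
  · push_neg at h
    have hEe : (1-a+a*e)*(2-a)+2*a ≤ (1-a+a*(476/1000))*(2-a)+2*a := by
      nlinarith [mul_nonneg (mul_nonneg ha0 h2a) (sub_nonneg.2 he)]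
    have hE' : (0:ℝ) ≤ (1-a+a*(476/1000))*(2-a)+2*a := le_trans hE hEe
    have hA0 : (0:ℝ) ≤ 1 - a + a * s := by nlinarith
    have hQ : (1-a+a*s)^2 ≤ (1-a+a*(1451/1000))^2 := by
      apply pow_le_pow_left₀ hA0
      nlinarith [mul_le_mul_of_nonneg_left hs ha0]
    have h1 := core1 a ha0 ha1
    nlinarith [mul_le_mul_of_nonneg_left hEe (le_of_lt (lt_trans (by norm_num) h)),
      mul_le_mul_of_nonneg_right (mul_le_mul_of_nonneg_left hQ h1a) hE']

lemma Fbound (α σ η : ℝ) (hα0 : 0 < α) (hα1 : α < 1) (hσ : σ = 1 - α / 2)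
    (hηpos : 0 < η) (hηroot : 1 - 3 * η ^ 2 * (1 + η) = 0) :
    (1 - α) * σ ^ α * ((σ * η) ^ (-α) - (σ * η + 1) ^ (-α)) ≤ 2/5 := by
  have hσ0 : 0 < σ := by rw [hσ]; linarith
  have h1a : (0:ℝ) ≤ 1 - α := by linarith
  have h2a : (0:ℝ) < 2 - α := by linarith
  have hη1 : (475/1000 : ℝ) ≤ η := by nlinarith [sq_nonneg (η - 475/1000), mul_pos hηpos hηpos]
  have hη2 : η ≤ (476/1000 : ℝ) := by nlinarith [sq_nonneg (η - 476/1000), mul_pos hηpos hηpos]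
  set s : ℝ := Real.sqrt η⁻¹ with hsdef
  have hs0 : 0 ≤ s := Real.sqrt_nonneg _
  have hs2 : s ^ 2 = η⁻¹ := Real.sq_sqrt (inv_nonneg.2 hηpos.le)
  have hs2' : s ^ 2 * η = 1 := by rw [hs2]; field_simp
  have hsle : s ≤ 1451/1000 := by
    nlinarith [mul_nonneg (sub_nonneg.2 hη1) (sq_nonneg s), sq_nonneg (s - 1451/1000)]
  have hs1 : 1 ≤ s := by
    nlinarith [mul_nonneg (sub_nonneg.2 hη2) (sq_nonneg s), sq_nonneg (s - 1)]
  -- rewrite σ^α * (σ*η)^(-α) = η^(-α)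
  have hσa : (0:ℝ) < σ ^ α := Real.rpow_pos_of_pos hσ0 α
  have e1 : σ ^ α * (σ * η) ^ (-α) = η ^ (-α) := by
    rw [Real.mul_rpow hσ0.le hηpos.le, ← mul_assoc, ← Real.rpow_add hσ0,
      show α + -α = 0 by ring, Real.rpow_zero, one_mul]
  have hc : (0:ℝ) < η + 1/σ := by
    have := one_div_pos.2 hσ0; linarith
  have e2 : σ ^ α * (σ * η + 1) ^ (-α) = (η + 1/σ) ^ (-α) := by
    have hh : σ * η + 1 = σ * (η + 1/σ) := by field_simp
    rw [hh, Real.mul_rpow hσ0.le hc.le, ← mul_assoc, ← Real.rpow_add hσ0,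
      show α + -α = 0 by ring, Real.rpow_zero, one_mul]
  have hA : η ^ (-α) ≤ (1 - α + α * s) ^ 2 := by
    have h1 : η ^ (-α) = (s ^ α) ^ 2 := by
      rw [Real.rpow_neg hηpos.le, ← Real.inv_rpow hηpos.le, ← hs2, sq, sq,
        Real.mul_rpow hs0 hs0]
    rw [h1]
    exact pow_le_pow_left₀ (Real.rpow_nonneg hs0 α) (chord hs0 hα0.le hα1.le) 2
  have hch := chord hc.le hα0.le hα1.le
  have hcp : (0:ℝ) < (η + 1/σ) ^ α := Real.rpow_pos_of_pos hc α
  have hB : 1 / (1 - α + α * (η + 1/σ)) ≤ (η + 1/σ) ^ (-α) := by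
    rw [Real.rpow_neg hc.le, one_div]
    exact inv_anti₀ hcp hch
  have hsub : η ^ (-α) - (η + 1/σ) ^ (-α)
      ≤ (1 - α + α * s) ^ 2 - 1 / (1 - α + α * (η + 1/σ)) := sub_le_sub hA hB
  have step1 : (1 - α) * σ ^ α * ((σ * η) ^ (-α) - (σ * η + 1) ^ (-α))
      = (1 - α) * (η ^ (-α) - (η + 1/σ) ^ (-α)) := by
    rw [mul_assoc, mul_sub, e1, e2]
  rw [step1]
  have hE' : (0:ℝ) < (1 - α + α * η) * (2 - α) + 2 * α := by
    nlinarith [mul_nonneg h1a h2a.le, mul_nonneg (mul_nonneg hα0.le hηpos.le) h2a.le]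
  have hm : (0:ℝ) < 1 - α + α * (η + 1/σ) := by nlinarith [mul_pos hα0 hc]
  have hσ2 : (1:ℝ) - α/2 ≠ 0 := by intro h; rw [hσ] at hσ0; linarith [hσ0]
  have hEeq : 1 / (1 - α + α * (η + 1/σ)) = (2 - α) / ((1 - α + α * η) * (2 - α) + 2 * α) := by
    rw [div_eq_div_iff hm.ne' hE'.ne', hσ]
    field_simp
    ring
  have hcore := core α s η hα0.le hα1.le hs1 hsle hηpos.le hη2
  have heq2 : (1 - α) * ((1 - α + α * s) ^ 2 - (2 - α) / ((1 - α + α * η) * (2 - α) + 2 * α))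
      = ((1-α)*((1-α+α*s)^2*((1-α+α*η)*(2-α)+2*α) - (2-α))) / ((1-α+α*η)*(2-α)+2*α) := by
    have hne := hE'.ne'
    field_simp
  calc (1 - α) * (η ^ (-α) - (η + 1/σ) ^ (-α))
      ≤ (1 - α) * ((1 - α + α * s) ^ 2 - (2 - α) / ((1 - α + α * η) * (2 - α) + 2 * α)) := by
        rw [← hEeq]; exact mul_le_mul_of_nonneg_left hsub h1a
    _ = ((1-α)*((1-α+α*s)^2*((1-α+α*η)*(2-α)+2*α) - (2-α))) / ((1-α+α*η)*(2-α)+2*α) := heq2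
    _ ≤ (2/5*((1-α+α*η)*(2-α)+2*α)) / ((1-α+α*η)*(2-α)+2*α) := by
        gcongr
    _ = 2/5 := by
        rw [mul_div_assoc, div_self hE'.ne', mul_one]

set_option maxHeartbeats 1000000 in



/-- Key diagonal positivity estimate. For `α ∈ (0,1)`, `σ = 1-α/2`, positive
`τ_k, τ_{k+1}` with `τ_{k+1}/τ_k ≥ η`, `η` the unique positive root of
`1-3ρ²(1+ρ)=0`:
`σ^{1-α}/((1-α)τ_k^α) - (1/2)(στ_k)^{-α} - (1/2)(στ_{k+1})^{-α} + (1/2)(στ_{k+1}+τ_k)^{-α}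
  ≥ (1/(2(1-α)(στ_k)^α))·(1-(1-α)σ^α[(ση)^{-α}-(ση+1)^{-α}])
  ≥ 0.3/((1-α)(στ_k)^α) > 0`. -/
theorem stmt_19 (α σ η τk τk1 : ℝ) (hα0 : 0 < α) (hα1 : α < 1)
    (hσ : σ = 1 - α / 2) (hηpos : 0 < η) (hηroot : 1 - 3 * η ^ 2 * (1 + η) = 0)
    (hτk : 0 < τk) (hτk1 : 0 < τk1) (hρ : η ≤ τk1 / τk) :
    σ ^ (1 - α) / ((1 - α) * τk ^ α) - (1 / 2) * (σ * τk) ^ (-α) -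
        (1 / 2) * (σ * τk1) ^ (-α) + (1 / 2) * (σ * τk1 + τk) ^ (-α)
      ≥ 1 / (2 * (1 - α) * (σ * τk) ^ α) *
          (1 - (1 - α) * σ ^ α * ((σ * η) ^ (-α) - (σ * η + 1) ^ (-α))) ∧
    1 / (2 * (1 - α) * (σ * τk) ^ α) *
        (1 - (1 - α) * σ ^ α * ((σ * η) ^ (-α) - (σ * η + 1) ^ (-α)))
      ≥ 0.3 / ((1 - α) * (σ * τk) ^ α) ∧
    0 < 0.3 / ((1 - α) * (σ * τk) ^ α) := by
  have hF := Fbound α σ η hα0 hα1 hσ hηpos hηroot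
  subst hσ
  set σ : ℝ := 1 - α / 2 with hσ
  have hσ0 : 0 < σ := by rw [hσ]; linarith
  have h1a : (0:ℝ) < 1 - α := by linarith
  have hne1a : (1 - α) ≠ 0 := h1a.ne'
  have hX : (0:ℝ) < (σ*τk)^α := Real.rpow_pos_of_pos (mul_pos hσ0 hτk) α
  have hne1 : ((1-α)*(σ*τk)^α) ≠ 0 := (mul_pos h1a hX).ne'
  have h2X : (0:ℝ) < 2*(1-α)*(σ*τk)^α := by nlinarith
  have G3 : (0:ℝ) < 0.3/((1-α)*(σ*τk)^α) := div_pos (by norm_num) (mul_pos h1a hX)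
  have hP : (0:ℝ) < 1/(2*(1-α)*(σ*τk)^α) := div_pos one_pos h2X
  have G2 : 1 / (2 * (1 - α) * (σ * τk) ^ α) *
        (1 - (1 - α) * σ ^ α * ((σ * η) ^ (-α) - (σ * η + 1) ^ (-α)))
      ≥ 0.3 / ((1 - α) * (σ * τk) ^ α) := by
    have h03 : (0.3:ℝ)/((1-α)*(σ*τk)^α) = 1/(2*(1-α)*(σ*τk)^α) * (3/5) := by
      have hne2 := h2X.ne'
      have hXne := hX.ne'
      field_simp
      ring
    rw [ge_iff_le, h03]
    apply mul_le_mul_of_nonneg_left _ hP.le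
    linarith [hF]
  refine ⟨?_, G2, G3⟩
  have hρ0 : 0 < τk1/τk := div_pos hτk1 hτk
  have hσa : σ^α ≠ 0 := (Real.rpow_pos_of_pos hσ0 α).ne'
  have hτa : τk^α ≠ 0 := (Real.rpow_pos_of_pos hτk α).ne'
  have hL1 : σ^(1-α)/((1-α)*τk^α) - 1/2*(σ*τk)^(-α) = 1/(2*(1-α)*(σ*τk)^α) := by
    have hσ1α : σ^(1-α) = σ * (σ^α)⁻¹ := by
      rw [show (1:ℝ)-α = 1+(-α) by ring, Real.rpow_add hσ0, Real.rpow_one, Real.rpow_neg hσ0.le]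
    rw [hσ1α, Real.rpow_neg (mul_pos hσ0 hτk).le, Real.mul_rpow hσ0.le hτk.le]
    have hσne := hσ0.ne'
    field_simp
    ring
  have hL2 : (σ*τk1)^(-α) = (σ*(τk1/τk))^(-α) * τk^(-α) := by
    rw [show σ*τk1 = (σ*(τk1/τk))*τk by field_simp,
      Real.mul_rpow (mul_pos hσ0 hρ0).le hτk.le]
  have hL3 : (σ*τk1+τk)^(-α) = (σ*(τk1/τk)+1)^(-α) * τk^(-α) := by
    rw [show σ*τk1+τk = (σ*(τk1/τk)+1)*τk by field_simp,
      Real.mul_rpow (by nlinarith [mul_pos hσ0 hρ0] : (0:ℝ) ≤ σ*(τk1/τk)+1) hτk.le]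
  have hPs : 1/(2*(1-α)*(σ*τk)^α) * ((1-α)*σ^α) = 1/2 * τk^(-α) := by
    rw [Real.mul_rpow hσ0.le hτk.le, Real.rpow_neg hτk.le]
    field_simp
  have key := g_anti α (σ*η) (σ*(τk1/τk)) hα0 (mul_pos hσ0 hηpos)
    (mul_le_mul_of_nonneg_left hρ hσ0.le)
  have ht : (0:ℝ) < τk^(-α) := Real.rpow_pos_of_pos hτk _
  have hRHS : 1/(2*(1-α)*(σ*τk)^α) * (1 - (1-α)*σ^α*((σ*η)^(-α)-(σ*η+1)^(-α)))
      = 1/(2*(1-α)*(σ*τk)^α) - 1/2*τk^(-α)*((σ*η)^(-α)-(σ*η+1)^(-α)) := by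
    rw [mul_sub, mul_one, ← hPs]
    ring
  rw [ge_iff_le, hRHS, hL2, hL3, show σ ^ (1 - α) / ((1 - α) * τk ^ α) - 1 / 2 * (σ * τk) ^ (-α) -
        1 / 2 * ((σ*(τk1/τk))^(-α) * τk^(-α)) + 1 / 2 * ((σ*(τk1/τk)+1)^(-α) * τk^(-α))
      = (σ^(1-α)/((1-α)*τk^α) - 1/2*(σ*τk)^(-α)) - 1 / 2 * ((σ*(τk1/τk))^(-α) * τk^(-α)) + 1 / 2 * ((σ*(τk1/τk)+1)^(-α) * τk^(-α)) by ring, hL1]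
  nlinarith [mul_le_mul_of_nonneg_left key (by linarith : (0:ℝ) ≤ 1/2*τk^(-α))]
end
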